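/- With the setup of the augmented Cheap Talk MDP (deterministic message function f : S → M, transitions and rewards independent of the message), the optimal state-action value function Q̄* of the augmented MDP satisfies Q̄*((s, f(s)), a) = Q*(s, a) for all s ∈ S and a ∈ A, where Q* is the optimal value function of the base MDP. -/
import Mathlib


open scoped NNReal

lemma abs_sup'_sub_sup'_le' {α : Type*} (s : Finset α) (hs : s.Nonempty)
    (f g : α → ℝ) (c : ℝ) (h : ∀ x ∈ s, |f x - g x| ≤ c) :
    |s.sup' hs f - s.sup' hs g| ≤ c := by
  rw [abs_sub_le_iff]
  constructor
  · rw [sub_le_iff_le_add]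
    apply Finset.sup'_le
    intro x hx
    have h1 := (abs_sub_le_iff.mp (h x hx)).1
    have h2 := Finset.le_sup' g hx
    linarith
  · rw [sub_le_iff_le_add]
    apply Finset.sup'_le
    intro x hx
    have h1 := (abs_sub_le_iff.mp (h x hx)).2
    have h2 := Finset.le_sup' f hx
    linarith

/-- Proposition 2 (optimality step): the optimal value function `Qbar` of the augmented
Cheap Talk MDP (kernel `P̄((s',m')|(s,m),a) = P(s'|s,a)·[m' = f s']`, reward
`R̄((s,m),a) = R(s,a)`) satisfies `Qbar((s, f s), a) = Qstar(s, a)`, where `Qstar` is the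
optimal value function of the base MDP. Both are characterised as fixed points of the
respective Bellman optimality operators. -/
theorem cheap_talk_optimal_value_correspondence
    {S M A : Type} [Fintype S] [Fintype M] [Fintype A]
    [Nonempty S] [Nonempty M] [Nonempty A] [DecidableEq M]
    (γ : ℝ) (hγ0 : 0 ≤ γ) (hγ1 : γ < 1)
    (P : S → A → S → ℝ≥0) (hP : ∀ s a, ∑ s', P s a s' = 1)
    (R : S → A → ℝ)
    (f : S → M)
    (Qstar : S → A → ℝ)
    (hQstar : ∀ s a, Qstar s a =
      R s a + γ * ∑ s', (P s a s' : ℝ) *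
        Finset.univ.sup' Finset.univ_nonempty (fun a' => Qstar s' a'))
    (Qbar : S × M → A → ℝ)
    (hQbar : ∀ p a, Qbar p a =
      R p.1 a + γ * ∑ q : S × M,
        (if q.2 = f q.1 then (P p.1 a q.1 : ℝ) else 0) *
          Finset.univ.sup' Finset.univ_nonempty (fun a' => Qbar q a')) :
    ∀ s a, Qbar (s, f s) a = Qstar s a := by
  -- simplified Bellman equation for the restriction of Qbar to the graph of f
  have key : ∀ s a, Qbar (s, f s) a =
      R s a + γ * ∑ s', (P s a s' : ℝ) *
        Finset.univ.sup' Finset.univ_nonempty (fun a' => Qbar (s', f s') a') := by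
    intro s a
    rw [hQbar (s, f s) a]
    congr 2
    rw [Fintype.sum_prod_type]
    apply Finset.sum_congr rfl
    intro s' _
    have : ∀ m : M,
        (if m = f s' then (P s a s' : ℝ) else 0) *
          Finset.univ.sup' Finset.univ_nonempty (fun a' => Qbar (s', m) a')
        = if m = f s' then
            (P s a s' : ℝ) *
              Finset.univ.sup' Finset.univ_nonempty (fun a' => Qbar (s', m) a')
          else 0 := by
      intro m; split <;> simp
    simp only [this]
    rw [Finset.sum_ite_eq' Finset.univ (f s')]
    simp
  -- sup-norm of the difference
  set E : S × A → ℝ := fun sa => |Qbar (sa.1, f sa.1) sa.2 - Qstar sa.1 sa.2| with hE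
  set d := Finset.univ.sup' Finset.univ_nonempty E with hd
  have hdnn : 0 ≤ d :=
    le_trans (abs_nonneg _)
      (Finset.le_sup' E (Finset.mem_univ (Classical.arbitrary (S × A))))
  have hbound : ∀ s a, E (s, a) ≤ γ * d := by
    intro s a
    have hdiff : Qbar (s, f s) a - Qstar s a =
        γ * ∑ s', (P s a s' : ℝ) *
          (Finset.univ.sup' Finset.univ_nonempty (fun a' => Qbar (s', f s') a')
            - Finset.univ.sup' Finset.univ_nonempty (fun a' => Qstar s' a')) := by
      rw [key s a, hQstar s a]
      simp only [mul_sub, Finset.sum_sub_distrib]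
      ring
    have habs : |Qbar (s, f s) a - Qstar s a| ≤ γ * d := by
      rw [hdiff, abs_mul, abs_of_nonneg hγ0]
      apply mul_le_mul_of_nonneg_left _ hγ0
      calc |∑ s', (P s a s' : ℝ) * _| ≤ ∑ s', |(P s a s' : ℝ) *
          (Finset.univ.sup' Finset.univ_nonempty (fun a' => Qbar (s', f s') a')
            - Finset.univ.sup' Finset.univ_nonempty (fun a' => Qstar s' a'))| :=
          Finset.abs_sum_le_sum_abs _ _
        _ ≤ ∑ s', (P s a s' : ℝ) * d := by
          apply Finset.sum_le_sum
          intro s' _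
          rw [abs_mul, abs_of_nonneg (P s a s').coe_nonneg]
          apply mul_le_mul_of_nonneg_left _ (P s a s').coe_nonneg
          apply abs_sup'_sub_sup'_le'
          intro a' _
          exact Finset.le_sup' E (Finset.mem_univ (s', a'))
        _ = d := by
          rw [← Finset.sum_mul]
          have : (∑ s', (P s a s' : ℝ)) = 1 := by
            rw [← NNReal.coe_sum, hP s a]; norm_num
          rw [this, one_mul]
    exact habs
  have hdle : d ≤ γ * d := by
    rw [hd]
    apply Finset.sup'_le
    intro x _
    exact hbound x.1 x.2
  have hd0 : d ≤ 0 := by nlinarith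
  intro s a
  have h1 : E (s, a) ≤ 0 :=
    le_trans (Finset.le_sup' E (Finset.mem_univ (s, a))) hd0
  have h2 : |Qbar (s, f s) a - Qstar s a| = 0 :=
    le_antisymm h1 (abs_nonneg _)
  have := abs_eq_zero.mp h2
  linarith
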